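/- Let M be a maximum matching of a finite bipartite graph G = (V, F, E) with coarse decomposition (T_I, T_C, T_O). Then every maximum matching M' of G matches every vertex of T_I ∩ F with a vertex of T_I ∩ V, and matches every vertex of T_O ∩ V with a vertex of T_O ∩ F; in particular, every vertex of T_I ∩ F and every vertex of T_O ∩ V is covered by every maximum matching of G. -/

import Mathlib

variable {F V : Type*} [Fintype F] [Fintype V] [DecidableEq F] [DecidableEq V]

/-- `M` is a matching of the bipartite graph with edge set `E`:
`M ⊆ E` and no two edges of `M` share an endpoint. -/
def IsMatching (E M : Finset (F × V)) : Prop :=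
  M ⊆ E ∧ (∀ e ∈ M, ∀ e' ∈ M, e.1 = e'.1 → e = e') ∧
    ∀ e ∈ M, ∀ e' ∈ M, e.2 = e'.2 → e = e'

/-- `M` is a maximum matching: a matching of greatest cardinality. -/
def IsMaxMatching (E M : Finset (F × V)) : Prop :=
  IsMatching E M ∧ ∀ M' : Finset (F × V), IsMatching E M' → M'.card ≤ M.card

/-- The (symmetric) adjacency relation of the bipartite graph on `F ⊕ V`. -/
def sumAdj (E : Finset (F × V)) : (F ⊕ V) → (F ⊕ V) → Prop
  | Sum.inl f, Sum.inr v => (f, v) ∈ E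
  | Sum.inr v, Sum.inl f => (f, v) ∈ E
  | _, _ => False

/-- The pair of consecutive path vertices forms an edge belonging to `M`. -/
def pairInM (M : Finset (F × V)) : (F ⊕ V) × (F ⊕ V) → Prop
  | (Sum.inl f, Sum.inr v) => (f, v) ∈ M
  | (Sum.inr v, Sum.inl f) => (f, v) ∈ M
  | _ => False

/-- `l` is an `M`-alternating path in the bipartite graph with edge set `E`:
a nonempty sequence of distinct vertices in which consecutive vertices are joined
by edges of `E` lying alternately inside and outside `M`. -/
def IsAltPath (E M : Finset (F × V)) (l : List (F ⊕ V)) : Prop :=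
  l ≠ [] ∧ l.Nodup ∧ l.Chain' (sumAdj E) ∧
    (l.zip l.tail).Chain' fun e e' => pairInM M e ↔ ¬ pairInM M e'

/-- `v ∈ V` is not an endpoint of any edge of `M`. -/
def VUnmatched (M : Finset (F × V)) (v : V) : Prop := ∀ f, (f, v) ∉ M

/-- `f ∈ F` is not an endpoint of any edge of `M`. -/
def FUnmatched (M : Finset (F × V)) (f : F) : Prop := ∀ v, (f, v) ∉ M

/-- The incomplete set `T_I`: all vertices reachable from some `M`-unmatched
vertex of `V` by a (possibly trivial) `M`-alternating path. -/
def incompleteSet (E M : Finset (F × V)) : Set (F ⊕ V) :=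
  {x | ∃ v : V, VUnmatched M v ∧ ∃ l : List (F ⊕ V),
    IsAltPath E M l ∧ l.head? = some (Sum.inr v) ∧ l.getLast? = some x}

/-- The overcomplete set `T_O`: all vertices reachable from some `M`-unmatched
vertex of `F` by a (possibly trivial) `M`-alternating path. -/
def overcompleteSet (E M : Finset (F × V)) : Set (F ⊕ V) :=
  {x | ∃ f : F, FUnmatched M f ∧ ∃ l : List (F ⊕ V),
    IsAltPath E M l ∧ l.head? = some (Sum.inl f) ∧ l.getLast? = some x}

/-- The complete set `T_C = (V ∪ F) \ (T_I ∪ T_O)`. -/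
def completeSet (E M : Finset (F × V)) : Set (F ⊕ V) :=
  Set.univ \ (incompleteSet E M ∪ overcompleteSet E M)

namespace DMaux

open List Sum

lemma zipTail_length {α : Type*} (l : List α) : (l.zip l.tail).length = l.length - 1 := by
  rw [List.length_zip, List.length_tail]; omega

lemma zipTail_getElem {α : Type*} (l : List α) (i : ℕ) (h : i < (l.zip l.tail).length) :
    (l.zip l.tail)[i] =
      (l[i]'(by rw [zipTail_length] at h; omega), l[i+1]'(by rw [zipTail_length] at h; omega)) := by
  have h2 : i < l.tail.length := by rw [zipTail_length] at h; simp; omega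
  rw [List.getElem_zip]
  congr 1
  rw [List.getElem_tail]

lemma zipTail_append {α : Type*} : ∀ (l : List α) (x z : α), l.getLast? = some x →
    ((l ++ [z]).zip (l ++ [z]).tail) = l.zip l.tail ++ [(x, z)]
  | [], x, z, h => by simp at h
  | [a], x, z, h => by simp_all
  | a :: b :: t, x, z, h => by
    have ih := zipTail_append (b :: t) x z (by simpa using h)
    simpa using ih

lemma zipTail_prefix {α : Type*} : ∀ (l r : List α), ((l.zip l.tail)) <+: ((l ++ r).zip (l ++ r).tail)
  | [], r => by simp
  | [a], r => by simp
  | a :: b :: t, r => by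
    have ih := zipTail_prefix (b :: t) r
    have h2 : (a :: b :: t ++ r).zip (a :: b :: t ++ r).tail
        = (a, b) :: ((b :: t ++ r).zip (b :: t ++ r).tail) := by simp
    have h1 : (a :: b :: t).zip (a :: b :: t).tail = (a, b) :: ((b :: t).zip (b :: t).tail) := by simp
    rw [h1, h2]
    exact List.cons_prefix_cons.mpr ⟨rfl, ih⟩

lemma chain'_rel_of_mem_zipTail {α : Type*} {R : α → α → Prop} {l : List α} (h : l.Chain' R)
    {x y : α} (hxy : (x, y) ∈ l.zip l.tail) : R x y := by
  obtain ⟨i, hi, hget⟩ := List.mem_iff_getElem.mp hxy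
  rw [zipTail_getElem] at hget
  injection hget with h1 h2
  subst h1; subst h2
  simpa using List.isChain_iff_getElem.mp h i (by rw [zipTail_length] at hi; omega)

lemma chain'_getElem {α : Type*} {R : α → α → Prop} {l : List α} (h : l.Chain' R)
    (i : ℕ) (hi : i + 1 < l.length) :
    R (l[i]'(by omega)) (l[i+1]'hi) := by
  simpa using List.isChain_iff_getElem.mp h i (by omega)

end DMaux

set_option linter.unusedSectionVars false
section DM2
variable {F V : Type*} [Fintype F] [Fintype V] [DecidableEq F] [DecidableEq V]
variable {E M : Finset (F × V)}

open DMaux List Sum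

/-- goodness relation: the edge (x,y) is in `M` iff `y` lies on the `V` side. -/
def goodRel (M : Finset (F × V)) (x y : F ⊕ V) : Prop :=
  pairInM M (x, y) ↔ ∃ v : V, y = Sum.inr v

lemma head?_getElem {α : Type*} {l : List α} {a : α} (h : l.head? = some a)
    (h0 : 0 < l.length) : l[0] = a := by
  cases l with
  | nil => simp at h
  | cons b t => simpa using h

lemma getLast?_getElem {α : Type*} {l : List α} {a : α} (h : l.getLast? = some a)
    (h0 : l.length - 1 < l.length) : l[l.length - 1] = a := by
  rw [List.getLast?_eq_getElem?] at h
  rw [List.getElem?_eq_some_iff] at h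
  exact h.2

lemma zipTail_getLast?_snd {α : Type*} {l : List α} {p : α × α}
    (h : (l.zip l.tail).getLast? = some p) : l.getLast? = some p.2 := by
  have hne : l.zip l.tail ≠ [] := by intro h0; rw [h0] at h; simp at h
  have hlen : 0 < (l.zip l.tail).length := List.length_pos_iff.mpr hne
  have hn : 2 ≤ l.length := by rw [zipTail_length] at hlen; omega
  have h1 := getLast?_getElem h (by omega)
  rw [zipTail_getElem] at h1
  · rw [List.getLast?_eq_getElem?, List.getElem?_eq_some_iff]
    refine ⟨by omega, ?_⟩
    rw [← h1]
    have : (l.zip l.tail).length - 1 + 1 = l.length - 1 := by rw [zipTail_length]; omega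
    simp only [this]

lemma chain'_good_aux : ∀ {l : List (F ⊕ V)}, l.Chain' (sumAdj E) →
    (l.zip l.tail).Chain' (fun p q => pairInM M p ↔ ¬ pairInM M q) →
    (∀ x y t, l = x :: y :: t → goodRel M x y) → l.Chain' (goodRel M)
  | [], _, _, _ => List.isChain_nil
  | [x], _, _, _ => List.isChain_singleton x
  | x :: y :: t, hadj, halt, hfirst => by
    have hxy : goodRel M x y := hfirst x y t rfl
    show List.IsChain _ _; rw [List.isChain_cons_cons]
    refine ⟨hxy, ?_⟩
    cases t with
    | nil => exact List.isChain_singleton y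
    | cons z t' =>
      have hadj' : (y :: z :: t').Chain' (sumAdj E) := (List.isChain_cons_cons.mp hadj).2
      have hyz : sumAdj E y z := (List.isChain_cons_cons.mp hadj').1
      have halt0 : (pairInM M (x, y) ↔ ¬ pairInM M (y, z)) := by
        have : ((x, y) :: (y, z) :: ((z :: t').zip t')).Chain'
            (fun p q => pairInM M p ↔ ¬ pairInM M q) := halt
        exact (List.isChain_cons_cons.mp this).1
      have halt' : ((y :: z :: t').zip (z :: t')).Chain'
          (fun p q => pairInM M p ↔ ¬ pairInM M q) := by
        have : ((x, y) :: ((y :: z :: t').zip (z :: t'))).Chain'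
            (fun p q => pairInM M p ↔ ¬ pairInM M q) := halt
        exact this.tail
      refine chain'_good_aux hadj' halt' ?_
      rintro a b t'' heq
      injection heq with h1 heq; injection heq with h2 _
      subst h1; subst h2
      rcases y with fy | vy
      · have hnm : ¬ pairInM M (x, Sum.inl fy) := fun hmem => by
          obtain ⟨v, hv⟩ := hxy.mp hmem
          exact absurd hv (by simp)
        have hin : pairInM M (Sum.inl fy, z) := by
          by_contra hc; exact hnm (halt0.mpr hc)
        rcases z with fz | vz
        · exact absurd hyz (by simp [sumAdj])
        · exact iff_of_true hin ⟨vz, rfl⟩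
      · have hmem : pairInM M (x, Sum.inr vy) := hxy.mpr ⟨vy, rfl⟩
        have hnm : ¬ pairInM M (Sum.inr vy, z) := halt0.mp hmem
        rcases z with fz | vz
        · exact iff_of_false hnm (by simp)
        · exact absurd hyz (by simp [sumAdj])

end DM2

section DM3
set_option linter.unusedSectionVars false
variable {F V : Type*} [Fintype F] [Fintype V] [DecidableEq F] [DecidableEq V]
variable {E M : Finset (F × V)}

open DMaux List Sum

lemma alt_good {l : List (F ⊕ V)} (hl : IsAltPath E M l) {v0 : V}
    (hh : l.head? = some (Sum.inr v0)) (hu : VUnmatched M v0) : l.Chain' (goodRel M) := by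
  obtain ⟨hne, hnd, hadj, halt⟩ := hl
  refine chain'_good_aux hadj halt ?_
  rintro x y t rfl
  have hx : x = Sum.inr v0 := by simpa using hh
  subst hx
  have hxy : sumAdj E (Sum.inr v0) y := (List.isChain_cons_cons.mp hadj).1
  rcases y with fy | vy
  · exact iff_of_false (fun hm => hu fy hm) (by simp)
  · exact absurd hxy (by simp [sumAdj])

lemma goodAt {l : List (F ⊕ V)} (hl : IsAltPath E M l) {v0 : V}
    (hh : l.head? = some (Sum.inr v0)) (hu : VUnmatched M v0) (i : ℕ) (hi : i + 1 < l.length) :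
    pairInM M (l[i]'(by omega), l[i+1]'hi) ↔ ∃ v : V, l[i+1]'hi = Sum.inr v :=
  chain'_getElem (alt_good ⟨hl.1, hl.2.1, hl.2.2.1, hl.2.2.2⟩ hh hu) i hi

lemma mem_TI_of_unmatched {v : V} (hu : VUnmatched M v) : Sum.inr v ∈ incompleteSet E M :=
  ⟨v, hu, [Sum.inr v], ⟨by simp, by simp, List.isChain_singleton _, List.isChain_nil⟩, rfl, rfl⟩

lemma mem_TI_of_mem_path {l : List (F ⊕ V)} (hl : IsAltPath E M l) {v0 : V}
    (hh : l.head? = some (Sum.inr v0)) (hu : VUnmatched M v0) {x : F ⊕ V} (hx : x ∈ l) :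
    x ∈ incompleteSet E M := by
  obtain ⟨l1, l2, rfl⟩ := List.append_of_mem hx
  obtain ⟨hne, hnd, hadj, halt⟩ := hl
  have hpre : (l1 ++ [x]) <+: (l1 ++ x :: l2) := ⟨l2, by simp⟩
  refine ⟨v0, hu, l1 ++ [x], ⟨by simp, hnd.sublist hpre.sublist, hadj.prefix hpre, ?_⟩, ?_, ?_⟩
  · have hz := zipTail_prefix (l1 ++ [x]) l2
    rw [show (l1 ++ [x]) ++ l2 = l1 ++ x :: l2 by simp] at hz
    exact halt.prefix hz
  · cases l1 with
    | nil =>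
      have : x = Sum.inr v0 := by simpa using hh
      simp [this]
    | cons a t =>
      have : a = Sum.inr v0 := by simpa using hh
      simp [this]
  · simp [List.getLast?_concat]

lemma alt_extend {l : List (F ⊕ V)} (hl : IsAltPath E M l) {x z : F ⊕ V}
    (hx : l.getLast? = some x) (hz : z ∉ l) (hadj : sumAdj E x z)
    (halt : ∀ p ∈ (l.zip l.tail).getLast?, (pairInM M p ↔ ¬ pairInM M (x, z))) :
    IsAltPath E M (l ++ [z]) := by
  obtain ⟨hne, hnd, hc, hzc⟩ := hl
  refine ⟨by simp, ?_, ?_, ?_⟩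
  · rw [List.nodup_append]
    exact ⟨hnd, List.nodup_singleton _, by intro a ha b hb; simp at hb; subst hb; exact fun h => hz (h ▸ ha)⟩
  · show List.IsChain _ _; rw [List.isChain_append]
    refine ⟨hc, List.isChain_singleton _, ?_⟩
    intro a ha b hb
    rw [hx] at ha
    simp at ha hb
    subst ha; subst hb
    exact hadj
  · rw [zipTail_append l x z hx]; show List.IsChain _ _; rw [List.isChain_append]
    refine ⟨hzc, List.isChain_singleton _, ?_⟩
    intro p hp q hq
    simp at hq
    subst hq
    exact halt p hp

end DM3

namespace DMaux
lemma getElem_idx_congr {α : Type*} {l : List α} {i j : ℕ} (h : i = j) (hi : i < l.length) :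
    l[i] = l[j]'(h ▸ hi) := by subst h; rfl
end DMaux

section DM5
set_option linter.unusedSectionVars false
variable {F V : Type*} [Fintype F] [Fintype V] [DecidableEq F] [DecidableEq V]
variable {E M : Finset (F × V)}

open DMaux List Sum

lemma alt_count {α : Type*} [DecidableEq α] (S : Finset α) :
    ∀ es : List α, es.Chain' (fun e e' => e ∈ S ↔ e' ∉ S) →
    ((es ≠ [] → (∀ x ∈ es.head?, x ∉ S) → (∀ x ∈ es.getLast?, x ∉ S) →
      (es.filter (fun e => decide (e ∉ S))).length
        = (es.filter (fun e => decide (e ∈ S))).length + 1)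
     ∧ ((∀ x ∈ es.head?, x ∈ S) → (∀ x ∈ es.getLast?, x ∉ S) →
      (es.filter (fun e => decide (e ∉ S))).length
        = (es.filter (fun e => decide (e ∈ S))).length))
  | [], _ => ⟨fun h => absurd rfl h, fun _ _ => rfl⟩
  | [e], hc => by
    constructor
    · intro _ hh _
      have he : e ∉ S := hh e rfl
      simp [he]
    · intro hh hl
      exact absurd (hh e rfl) (hl e rfl)
  | e :: e2 :: rest, hc => by
    have hc' := (List.isChain_cons_cons.mp hc).2
    have halt : e ∈ S ↔ e2 ∉ S := (List.isChain_cons_cons.mp hc).1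
    have ih := alt_count S (e2 :: rest) hc'
    constructor
    · intro _ hh hl
      have he : e ∉ S := hh e rfl
      have he2 : e2 ∈ S := by
        by_contra h
        exact he (halt.mpr h)
      have := ih.2 (by intro x hx; simp at hx; subst hx; exact he2)
        (by intro x hx; exact hl x (by rw [List.getLast?_cons_cons]; exact hx))
      simp only [List.filter_cons] at this ⊢
      simp [he, he2] at this ⊢
      omega
    · intro hh hl
      have he : e ∈ S := hh e rfl
      have he2 : e2 ∉ S := halt.mp he
      have := ih.1 (by simp) (by intro x hx; simp at hx; subst hx; exact he2)
        (by intro x hx; exact hl x (by rw [List.getLast?_cons_cons]; exact hx))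
      simp only [List.filter_cons] at this ⊢
      simp [he, he2] at this ⊢
      omega

/-- convert an adjacent pair of path vertices to an edge (with default `d`). -/
def toEdge (d : F × V) : (F ⊕ V) × (F ⊕ V) → F × V
  | (Sum.inl f, Sum.inr v) => (f, v)
  | (Sum.inr v, Sum.inl f) => (f, v)
  | _ => d

lemma toEdge_spec {d : F × V} {p : (F ⊕ V) × (F ⊕ V)} (h : sumAdj E p.1 p.2) :
    (p = (Sum.inl (toEdge d p).1, Sum.inr (toEdge d p).2) ∨
     p = (Sum.inr (toEdge d p).2, Sum.inl (toEdge d p).1)) ∧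
    toEdge d p ∈ E ∧ (pairInM M p ↔ toEdge d p ∈ M) := by
  obtain ⟨x, y⟩ := p
  rcases x with fx | vx <;> rcases y with fy | vy <;> simp [sumAdj] at h <;>
    simp [toEdge, pairInM, h]

end DM5

section DM6
set_option linter.unusedSectionVars false
variable {F V : Type*} [Fintype F] [Fintype V] [DecidableEq F] [DecidableEq V]
variable {E M : Finset (F × V)} {l : List (F ⊕ V)} {v0 : V} {f : F}

open DMaux List Sum

/-- the list of edges traversed by a path. -/
def pathEdges (d : F × V) (l : List (F ⊕ V)) : List (F × V) := (l.zip l.tail).map (toEdge d)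

lemma pathEdges_length (d : F × V) (l : List (F ⊕ V)) :
    (pathEdges d l).length = l.length - 1 := by
  simp [pathEdges, zipTail_length]

lemma pathEdges_getElem (d : F × V) (l : List (F ⊕ V)) (i : ℕ)
    (hi : i < (pathEdges d l).length) :
    (pathEdges d l)[i] =
      toEdge d (l[i]'(by rw [pathEdges_length] at hi; omega),
                l[i+1]'(by rw [pathEdges_length] at hi; omega)) := by
  have hi' : i < (l.zip l.tail).length := by
    rw [pathEdges_length] at hi; rw [zipTail_length]; omega
  simp only [pathEdges, List.getElem_map]
  congr 1
  exact zipTail_getElem l i hi'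

lemma pathEdges_mem_iff {d : F × V} {e : F × V} :
    e ∈ pathEdges d l ↔ ∃ (i : ℕ) (h : i + 1 < l.length),
      e = toEdge d (l[i]'(by omega), l[i+1]'h) := by
  constructor
  · intro he
    obtain ⟨i, hi, hei⟩ := List.mem_iff_getElem.mp he
    refine ⟨i, by rw [pathEdges_length] at hi; omega, ?_⟩
    rw [← hei, pathEdges_getElem]
  · rintro ⟨i, h, rfl⟩
    have hi : i < (pathEdges d l).length := by rw [pathEdges_length]; omega
    rw [List.mem_iff_getElem]
    exact ⟨i, hi, (pathEdges_getElem d l i hi)⟩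

lemma aug_consec (hnd : l.Nodup) (hadjc : l.Chain' (sumAdj E))
    (haltc : (l.zip l.tail).Chain' fun e e' => pairInM M e ↔ ¬ pairInM M e')
    (d : F × V) {i j : ℕ} (hij : i < j) (hi : i + 1 < l.length) (hj : j + 1 < l.length)
    (hiM : toEdge d (l[i]'(by omega), l[i+1]'hi) ∉ M)
    (hjM : toEdge d (l[j]'(by omega), l[j+1]'hj) ∉ M)
    (hsh : (toEdge d (l[i]'(by omega), l[i+1]'hi)).1 = (toEdge d (l[j]'(by omega), l[j+1]'hj)).1
         ∨ (toEdge d (l[i]'(by omega), l[i+1]'hi)).2 = (toEdge d (l[j]'(by omega), l[j+1]'hj)).2) :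
    False := by
  have si := toEdge_spec (E := E) (M := M) (d := d)
    (p := (l[i]'(by omega), l[i+1]'hi)) (chain'_getElem hadjc i hi)
  have sj := toEdge_spec (E := E) (M := M) (d := d)
    (p := (l[j]'(by omega), l[j+1]'hj)) (chain'_getElem hadjc j hj)
  obtain ⟨soi, _, smi⟩ := si
  obtain ⟨soj, _, smj⟩ := sj
  have hcons : j = i + 1 := by
    rcases soi with hoi | hoi <;> rw [Prod.mk.injEq] at hoi <;> obtain ⟨h1i, h2i⟩ := hoi <;>
    rcases soj with hoj | hoj <;> rw [Prod.mk.injEq] at hoj <;> obtain ⟨h1j, h2j⟩ := hoj <;>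
    rcases hsh with hsh | hsh
    · exact absurd (hnd.getElem_inj_iff.mp (h1i.trans (by rw [hsh]; exact h1j.symm))) (by omega)
    · exact absurd (hnd.getElem_inj_iff.mp (h2i.trans (by rw [hsh]; exact h2j.symm))) (by omega)
    · have := hnd.getElem_inj_iff.mp (h1i.trans (by rw [hsh]; exact h2j.symm)); omega
    · have := hnd.getElem_inj_iff.mp (h2i.trans (by rw [hsh]; exact h1j.symm)); omega
    · have := hnd.getElem_inj_iff.mp (h2i.trans (by rw [hsh]; exact h1j.symm)); omega
    · have := hnd.getElem_inj_iff.mp (h1i.trans (by rw [hsh]; exact h2j.symm)); omega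
    · exact absurd (hnd.getElem_inj_iff.mp (h2i.trans (by rw [hsh]; exact h2j.symm))) (by omega)
    · exact absurd (hnd.getElem_inj_iff.mp (h1i.trans (by rw [hsh]; exact h1j.symm))) (by omega)
  subst hcons
  have hb : i + 1 < (l.zip l.tail).length := by rw [zipTail_length]; omega
  have halt := chain'_getElem haltc i hb
  rw [show (l.zip l.tail)[i]'(by omega) = ((l[i]'(by omega), l[i+1]'(by omega)) : (F ⊕ V) × (F ⊕ V))
      from zipTail_getElem l i (by omega),
    show (l.zip l.tail)[i+1]'hb = ((l[i+1]'(by omega), l[i+1+1]'(by omega)) : (F ⊕ V) × (F ⊕ V))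
      from zipTail_getElem l (i+1) hb] at halt
  have h1 : ¬ pairInM M ((l[i]'(by omega), l[i+1]'(by omega)) : (F ⊕ V) × (F ⊕ V)) :=
    fun h => hiM (smi.mp h)
  have h2 : pairInM M ((l[i+1]'(by omega), l[i+1+1]'(by omega)) : (F ⊕ V) × (F ⊕ V)) := by
    by_contra hq
    exact h1 (halt.mpr hq)
  exact hjM (smj.mp h2)

end DM6

section DM7
set_option linter.unusedSectionVars false
variable {F V : Type*} [Fintype F] [Fintype V] [DecidableEq F] [DecidableEq V]
variable {E M : Finset (F × V)} {l : List (F ⊕ V)} {v0 : V} {f : F}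

open DMaux List Sum

lemma aug_F1 (hnd : l.Nodup) (hadjc : l.Chain' (sumAdj E))
    (haltc : (l.zip l.tail).Chain' fun e e' => pairInM M e ↔ ¬ pairInM M e')
    (d : F × V) {i j : ℕ} (hi : i + 1 < l.length) (hj : j + 1 < l.length)
    (hiM : toEdge d (l[i]'(by omega), l[i+1]'hi) ∉ M)
    (hjM : toEdge d (l[j]'(by omega), l[j+1]'hj) ∉ M)
    (hsh : (toEdge d (l[i]'(by omega), l[i+1]'hi)).1 = (toEdge d (l[j]'(by omega), l[j+1]'hj)).1
         ∨ (toEdge d (l[i]'(by omega), l[i+1]'hi)).2 = (toEdge d (l[j]'(by omega), l[j+1]'hj)).2) :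
    toEdge d (l[i]'(by omega), l[i+1]'hi) = toEdge d (l[j]'(by omega), l[j+1]'hj) := by
  rcases Nat.lt_trichotomy i j with hij | rfl | hij
  · exact absurd (aug_consec hnd hadjc haltc d hij hi hj hiM hjM hsh) (by simp)
  · rfl
  · exact absurd (aug_consec hnd hadjc haltc d hij hj hi hjM hiM
      (by rcases hsh with h | h; exacts [Or.inl h.symm, Or.inr h.symm])) (by simp)

lemma aug_inj (hnd : l.Nodup) (hadjc : l.Chain' (sumAdj E))
    (d : F × V) {i j : ℕ} (hi : i + 1 < l.length) (hj : j + 1 < l.length)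
    (heq : toEdge d (l[i]'(by omega), l[i+1]'hi) = toEdge d (l[j]'(by omega), l[j+1]'hj)) :
    i = j := by
  have si := toEdge_spec (E := E) (M := E) (d := d)
    (p := (l[i]'(by omega), l[i+1]'hi)) (chain'_getElem hadjc i hi)
  have sj := toEdge_spec (E := E) (M := E) (d := d)
    (p := (l[j]'(by omega), l[j+1]'hj)) (chain'_getElem hadjc j hj)
  obtain ⟨soi, -, -⟩ := si
  obtain ⟨soj, -, -⟩ := sj
  rcases soi with hoi | hoi <;> rw [Prod.mk.injEq] at hoi <;> obtain ⟨h1i, h2i⟩ := hoi <;>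
  rcases soj with hoj | hoj <;> rw [Prod.mk.injEq] at hoj <;> obtain ⟨h1j, h2j⟩ := hoj
  · exact hnd.getElem_inj_iff.mp (h1i.trans (by rw [heq]; exact h1j.symm))
  · have e1 := hnd.getElem_inj_iff.mp (h1i.trans (by rw [heq]; exact h2j.symm))
    have e2 := hnd.getElem_inj_iff.mp (h2i.trans (by rw [heq]; exact h1j.symm))
    omega
  · have e1 := hnd.getElem_inj_iff.mp (h1i.trans (by rw [heq]; exact h2j.symm))
    have e2 := hnd.getElem_inj_iff.mp (h2i.trans (by rw [heq]; exact h1j.symm))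
    omega
  · exact hnd.getElem_inj_iff.mp (h1i.trans (by rw [heq]; exact h1j.symm))

lemma pathEdges_nodup (hnd : l.Nodup) (hadjc : l.Chain' (sumAdj E))
    (d : F × V) : (pathEdges d l).Nodup := by
  rw [List.nodup_iff_injective_getElem]
  intro a b hab
  obtain ⟨a, ha⟩ := a
  obtain ⟨b, hb⟩ := b
  have hab' : (pathEdges d l)[a] = (pathEdges d l)[b] := hab
  rw [pathEdges_getElem, pathEdges_getElem] at hab'
  have := aug_inj (E := E) hnd hadjc d
    (by rw [pathEdges_length] at ha; omega) (by rw [pathEdges_length] at hb; omega) hab'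
  exact Fin.ext this

end DM7

section DM8
set_option linter.unusedSectionVars false
variable {F V : Type*} [Fintype F] [Fintype V] [DecidableEq F] [DecidableEq V]
variable {E M : Finset (F × V)} {l : List (F ⊕ V)} {v0 : V} {f : F}

open DMaux List Sum

lemma aug_F2 (hM : IsMatching E M) (hl : IsAltPath E M l)
    (hh : l.head? = some (Sum.inr v0)) (hu : VUnmatched M v0)
    (hlast : l.getLast? = some (Sum.inl f)) (hfu : FUnmatched M f) (d : F × V)
    {f' : F} {w : V} (hm : (f', w) ∈ M) (hfl : Sum.inl f' ∈ l) :
    (f', w) ∈ pathEdges d l := by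
  obtain ⟨j, hj, hje⟩ := List.mem_iff_getElem.mp hfl
  have hn1 : 0 < l.length := by omega
  have hj0 : j ≠ 0 := by
    intro h
    subst h
    rw [head?_getElem hh hn1] at hje
    simp at hje
  have hjl : j ≠ l.length - 1 := by
    intro heq
    have h1 : l[l.length - 1]'(by omega) = Sum.inl f' :=
      (getElem_idx_congr heq.symm (by omega)).trans hje
    rw [getLast?_getElem hlast (by omega)] at h1
    injection h1 with h1
    subst h1
    exact hfu w hm
  have hjj : j + 1 < l.length := by omega
  have hadjj := chain'_getElem hl.2.2.1 j hjj
  rcases hc2 : l[j+1]'hjj with f2 | v2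
  · rw [hje, hc2] at hadjj
    simp [sumAdj] at hadjj
  · have hg := goodAt hl hh hu j hjj
    rw [hje, hc2] at hg
    have hmem : pairInM M ((Sum.inl f' : F ⊕ V), (Sum.inr v2 : F ⊕ V)) := hg.mpr ⟨v2, rfl⟩
    have hmem2 : (f', v2) ∈ M := hmem
    have heq2 : (f', w) = (f', v2) := hM.2.1 _ hm _ hmem2 rfl
    injection heq2 with _ hw
    subst hw
    rw [pathEdges_mem_iff]
    exact ⟨j, hjj, by rw [hje, hc2]; rfl⟩

lemma aug_F2' (hM : IsMatching E M) (hl : IsAltPath E M l)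
    (hh : l.head? = some (Sum.inr v0)) (hu : VUnmatched M v0) (d : F × V)
    {w : F} {v' : V} (hm : (w, v') ∈ M) (hvl : Sum.inr v' ∈ l) :
    (w, v') ∈ pathEdges d l := by
  obtain ⟨j, hj, hje⟩ := List.mem_iff_getElem.mp hvl
  have hn1 : 0 < l.length := by omega
  have hj0 : j ≠ 0 := by
    intro h
    subst h
    rw [head?_getElem hh hn1] at hje
    injection hje with h1
    subst h1
    exact hu w hm
  obtain ⟨k, rfl⟩ : ∃ k, j = k + 1 := ⟨j - 1, by omega⟩
  have hadjk := chain'_getElem hl.2.2.1 k hj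
  rcases hck : l[k]'(by omega) with f2 | w2
  · have hg := goodAt hl hh hu k hj
    rw [hck, hje] at hg
    have hmem : pairInM M ((Sum.inl f2 : F ⊕ V), (Sum.inr v' : F ⊕ V)) := hg.mpr ⟨v', rfl⟩
    have hmem2 : (f2, v') ∈ M := hmem
    have heq2 : (w, v') = (f2, v') := hM.2.2 _ hm _ hmem2 rfl
    injection heq2 with hw _
    subst hw
    rw [pathEdges_mem_iff]
    exact ⟨k, hj, by rw [hck, hje]; rfl⟩
  · rw [hck, hje] at hadjk
    simp [sumAdj] at hadjk

end DM8

section DM9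
set_option linter.unusedSectionVars false
variable {F V : Type*} [Fintype F] [Fintype V] [DecidableEq F] [DecidableEq V]
variable {E M : Finset (F × V)} {l : List (F ⊕ V)} {v0 : V} {f : F}

open DMaux List Sum

lemma aug_contra_main (hM : IsMaxMatching E M) (hl : IsAltPath E M l)
    (hh : l.head? = some (Sum.inr v0)) (hu : VUnmatched M v0)
    (hlast : l.getLast? = some (Sum.inl f)) (hfu : FUnmatched M f) : False := by
  classical
  obtain ⟨hne, hnd, hadjc, haltc⟩ := hl
  have hl' : IsAltPath E M l := ⟨hne, hnd, hadjc, haltc⟩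
  have hn1 : 0 < l.length := List.length_pos_iff.mpr hne
  have h0 : l[0] = Sum.inr v0 := head?_getElem hh hn1
  have hlaste : l[l.length - 1] = Sum.inl f := getLast?_getElem hlast (by omega)
  have hn2 : 2 ≤ l.length := by
    by_contra hc
    have h1 : (0 : ℕ) = l.length - 1 := by omega
    have h2 := (getElem_idx_congr h1 (by omega)).symm.trans h0
    rw [hlaste] at h2
    simp at h2
  have heslen : (pathEdges (f, v0) l).length = l.length - 1 := pathEdges_length (f, v0) l
  -- alternation chain on the edge list
  have hchain : (pathEdges (f, v0) l).Chain' (fun e e' => e ∈ M ↔ e' ∉ M) := by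
    show List.IsChain _ _; rw [List.isChain_iff_getElem]
    intro i hi
    rw [heslen] at hi
    have hb1 : i + 1 < l.length := by omega
    have hb2 : i + 1 + 1 < l.length := by omega
    rw [pathEdges_getElem (f, v0) l i (by rw [heslen]; omega),
        pathEdges_getElem (f, v0) l (i+1) (by rw [heslen]; omega)]
    have si := toEdge_spec (E := E) (M := M) (d := (f, v0))
      (p := (l[i]'(by omega), l[i+1]'hb1)) (chain'_getElem hadjc i hb1)
    have sj := toEdge_spec (E := E) (M := M) (d := (f, v0))
      (p := (l[i+1]'(by omega), l[i+1+1]'hb2)) (chain'_getElem hadjc (i+1) hb2)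
    have hb : i + 1 < (l.zip l.tail).length := by rw [zipTail_length]; omega
    have halt := chain'_getElem haltc i hb
    rw [show (l.zip l.tail)[i]'(by omega)
          = ((l[i]'(by omega), l[i+1]'hb1) : (F ⊕ V) × (F ⊕ V))
        from zipTail_getElem l i (by omega),
      show (l.zip l.tail)[i+1]'hb
          = ((l[i+1]'(by omega), l[i+1+1]'hb2) : (F ⊕ V) × (F ⊕ V))
        from zipTail_getElem l (i+1) hb] at halt
    exact si.2.2.symm.trans (halt.trans (not_congr sj.2.2))
  -- head edge not in `M`
  have hhead : ∀ x ∈ (pathEdges (f, v0) l).head?, x ∉ M := by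
    intro x hx
    have hlen0 : 0 < (pathEdges (f, v0) l).length := by rw [heslen]; omega
    have hx0 : (pathEdges (f, v0) l)[0] = x := head?_getElem hx hlen0
    rw [pathEdges_getElem (f, v0) l 0 hlen0] at hx0
    have hb1 : 0 + 1 < l.length := by omega
    have hadj0 := chain'_getElem hadjc 0 hb1
    rcases hc1 : l[0+1]'hb1 with f1 | v1
    · rw [h0, hc1] at hx0
      intro hxm
      rw [← hx0] at hxm
      exact hu f1 hxm
    · rw [h0, hc1] at hadj0
      simp [sumAdj] at hadj0
  -- last edge not in `M`
  have hlastes : ∀ x ∈ (pathEdges (f, v0) l).getLast?, x ∉ M := by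
    intro x hx
    have hx0 : (pathEdges (f, v0) l)[(pathEdges (f, v0) l).length - 1] = x :=
      getLast?_getElem hx (by rw [heslen]; omega)
    have hidx : (pathEdges (f, v0) l).length - 1 = l.length - 2 := by rw [heslen]; omega
    have h1 := (getElem_idx_congr hidx (by rw [heslen]; omega)).symm.trans hx0
    rw [pathEdges_getElem (f, v0) l (l.length - 2) (by rw [heslen]; omega)] at h1
    have hbk : l.length - 2 + 1 < l.length := by omega
    have hkk : l.length - 2 + 1 = l.length - 1 := by omega
    have h2 : l[l.length - 2 + 1]'hbk = Sum.inl f := (getElem_idx_congr hkk hbk).trans hlaste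
    have hadjk := chain'_getElem hadjc (l.length - 2) hbk
    rcases hck : l[l.length - 2]'(by omega) with f1 | v1
    · rw [hck, h2] at hadjk
      simp [sumAdj] at hadjk
    · rw [hck, h2] at h1
      intro hxm
      rw [← h1] at hxm
      exact hfu v1 hxm
  have hesne : pathEdges (f, v0) l ≠ [] := by
    intro h
    rw [h] at heslen
    simp at heslen
    omega
  have hcnt := (alt_count M (pathEdges (f, v0) l) hchain).1 hesne hhead hlastes
  have hesnd : (pathEdges (f, v0) l).Nodup := pathEdges_nodup hnd hadjc (f, v0)
  set P := (pathEdges (f, v0) l).toFinset with hP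
  have hc1 : (P \ M).card = ((pathEdges (f, v0) l).filter (fun e => decide (e ∉ M))).length := by
    rw [show P \ M = ((pathEdges (f, v0) l).filter (fun e => decide (e ∉ M))).toFinset by
      ext a; simp [hP, List.mem_filter]]
    exact List.toFinset_card_of_nodup (hesnd.filter _)
  have hc2 : (P ∩ M).card = ((pathEdges (f, v0) l).filter (fun e => decide (e ∈ M))).length := by
    rw [show P ∩ M = ((pathEdges (f, v0) l).filter (fun e => decide (e ∈ M))).toFinset by
      ext a; simp [hP, List.mem_filter]]
    exact List.toFinset_card_of_nodup (hesnd.filter _)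
  have hdisj : Disjoint (M \ P) (P \ M) := by
    rw [Finset.disjoint_left]
    intro a ha hb
    exact (Finset.mem_sdiff.mp hb).2 (Finset.mem_sdiff.mp ha).1
  have hcard : ((M \ P) ∪ (P \ M)).card = M.card + 1 := by
    rw [Finset.card_union_of_disjoint hdisj]
    have h3 := Finset.card_sdiff_add_card_inter M P
    have h4 : P ∩ M = M ∩ P := Finset.inter_comm P M
    rw [h4] at hc2
    omega
  have hmem_es : ∀ e ∈ P, ∃ (i : ℕ) (h : i + 1 < l.length),
      e = toEdge (f, v0) (l[i]'(by omega), l[i+1]'h) := by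
    intro e he
    exact pathEdges_mem_iff.mp (List.mem_toFinset.mp he)
  have hmatch : IsMatching E ((M \ P) ∪ (P \ M)) := by
    refine ⟨?_, ?_, ?_⟩
    · intro e he
      rcases Finset.mem_union.mp he with h1 | h1
      · exact hM.1.1 (Finset.mem_sdiff.mp h1).1
      · obtain ⟨i, hi, rfl⟩ := hmem_es e (Finset.mem_sdiff.mp h1).1
        exact (toEdge_spec (M := M) (d := (f, v0))
          (p := (l[i]'(by omega), l[i+1]'hi)) (chain'_getElem hadjc i hi)).2.1
    · intro e he e' he' heq
      rcases Finset.mem_union.mp he with h1 | h1 <;> rcases Finset.mem_union.mp he' with h2 | h2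
      · exact hM.1.2.1 e (Finset.mem_sdiff.mp h1).1 e' (Finset.mem_sdiff.mp h2).1 heq
      · exfalso
        obtain ⟨hm1, hp1⟩ := Finset.mem_sdiff.mp h1
        obtain ⟨hp2, hm2⟩ := Finset.mem_sdiff.mp h2
        obtain ⟨i, hi, he'e⟩ := hmem_es e' hp2
        have hfl : Sum.inl e'.1 ∈ l := by
          rcases (toEdge_spec (E := E) (M := M) (d := (f, v0))
              (p := (l[i]'(by omega), l[i+1]'hi)) (chain'_getElem hadjc i hi)).1 with ho | ho <;>
            rw [Prod.mk.injEq] at ho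
          · rw [he'e, ← ho.1]; exact List.getElem_mem _
          · rw [he'e, ← ho.2]; exact List.getElem_mem _
        have h5 : (e'.1, e.2) = e := by rw [← heq]
        have h6 : (e'.1, e.2) ∈ pathEdges (f, v0) l :=
          aug_F2 hM.1 hl' hh hu hlast hfu (f, v0) (by rw [h5]; exact hm1) hfl
        exact hp1 (List.mem_toFinset.mpr (h5 ▸ h6))
      · exfalso
        obtain ⟨hp1, hm1⟩ := Finset.mem_sdiff.mp h1
        obtain ⟨hm2, hp2⟩ := Finset.mem_sdiff.mp h2
        obtain ⟨i, hi, hee⟩ := hmem_es e hp1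
        have hfl : Sum.inl e.1 ∈ l := by
          rcases (toEdge_spec (E := E) (M := M) (d := (f, v0))
              (p := (l[i]'(by omega), l[i+1]'hi)) (chain'_getElem hadjc i hi)).1 with ho | ho <;>
            rw [Prod.mk.injEq] at ho
          · rw [hee, ← ho.1]; exact List.getElem_mem _
          · rw [hee, ← ho.2]; exact List.getElem_mem _
        have h5 : (e.1, e'.2) = e' := by rw [heq]
        have h6 : (e.1, e'.2) ∈ pathEdges (f, v0) l :=
          aug_F2 hM.1 hl' hh hu hlast hfu (f, v0) (by rw [h5]; exact hm2) hfl
        exact hp2 (List.mem_toFinset.mpr (h5 ▸ h6))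
      · obtain ⟨hp1, hm1⟩ := Finset.mem_sdiff.mp h1
        obtain ⟨hp2, hm2⟩ := Finset.mem_sdiff.mp h2
        obtain ⟨i, hi, rfl⟩ := hmem_es e hp1
        obtain ⟨j, hj, rfl⟩ := hmem_es e' hp2
        exact aug_F1 hnd hadjc haltc (f, v0) hi hj hm1 hm2 (Or.inl heq)
    · intro e he e' he' heq
      rcases Finset.mem_union.mp he with h1 | h1 <;> rcases Finset.mem_union.mp he' with h2 | h2
      · exact hM.1.2.2 e (Finset.mem_sdiff.mp h1).1 e' (Finset.mem_sdiff.mp h2).1 heq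
      · exfalso
        obtain ⟨hm1, hp1⟩ := Finset.mem_sdiff.mp h1
        obtain ⟨hp2, hm2⟩ := Finset.mem_sdiff.mp h2
        obtain ⟨i, hi, he'e⟩ := hmem_es e' hp2
        have hvl : Sum.inr e'.2 ∈ l := by
          rcases (toEdge_spec (E := E) (M := M) (d := (f, v0))
              (p := (l[i]'(by omega), l[i+1]'hi)) (chain'_getElem hadjc i hi)).1 with ho | ho <;>
            rw [Prod.mk.injEq] at ho
          · rw [he'e, ← ho.2]; exact List.getElem_mem _
          · rw [he'e, ← ho.1]; exact List.getElem_mem _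
        have h5 : (e.1, e'.2) = e := by rw [← heq]
        have h6 : (e.1, e'.2) ∈ pathEdges (f, v0) l :=
          aug_F2' hM.1 hl' hh hu (f, v0) (by rw [h5]; exact hm1) hvl
        exact hp1 (List.mem_toFinset.mpr (h5 ▸ h6))
      · exfalso
        obtain ⟨hp1, hm1⟩ := Finset.mem_sdiff.mp h1
        obtain ⟨hm2, hp2⟩ := Finset.mem_sdiff.mp h2
        obtain ⟨i, hi, hee⟩ := hmem_es e hp1
        have hvl : Sum.inr e.2 ∈ l := by
          rcases (toEdge_spec (E := E) (M := M) (d := (f, v0))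
              (p := (l[i]'(by omega), l[i+1]'hi)) (chain'_getElem hadjc i hi)).1 with ho | ho <;>
            rw [Prod.mk.injEq] at ho
          · rw [hee, ← ho.2]; exact List.getElem_mem _
          · rw [hee, ← ho.1]; exact List.getElem_mem _
        have h5 : (e'.1, e.2) = e' := by rw [heq]
        have h6 : (e'.1, e.2) ∈ pathEdges (f, v0) l :=
          aug_F2' hM.1 hl' hh hu (f, v0) (by rw [h5]; exact hm2) hvl
        exact hp2 (List.mem_toFinset.mpr (h5 ▸ h6))
      · obtain ⟨hp1, hm1⟩ := Finset.mem_sdiff.mp h1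
        obtain ⟨hp2, hm2⟩ := Finset.mem_sdiff.mp h2
        obtain ⟨i, hi, rfl⟩ := hmem_es e hp1
        obtain ⟨j, hj, rfl⟩ := hmem_es e' hp2
        exact aug_F1 hnd hadjc haltc (f, v0) hi hj hm1 hm2 (Or.inr heq)
  have hle := hM.2 _ hmatch
  omega

end DM9

section DM4
set_option linter.unusedSectionVars false
variable {F V : Type*} [Fintype F] [Fintype V] [DecidableEq F] [DecidableEq V]
variable {E M : Finset (F × V)}

open DMaux List Sum

lemma aug_contra (hM : IsMaxMatching E M) {l : List (F ⊕ V)} (hl : IsAltPath E M l)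
    {v0 : V} {f : F} (hh : l.head? = some (Sum.inr v0)) (hu : VUnmatched M v0)
    (hlast : l.getLast? = some (Sum.inl f)) (hfu : FUnmatched M f) : False :=
  aug_contra_main hM hl hh hu hlast hfu

lemma TI_V_partner (hM : IsMatching E M) {v : V} (hv : Sum.inr v ∈ incompleteSet E M)
    {f : F} (hfv : (f, v) ∈ M) : Sum.inl f ∈ incompleteSet E M := by
  obtain ⟨v0, hu, l, hl, hh, hlast⟩ := hv
  have hlen : 0 < l.length := List.length_pos_iff.mpr hl.1
  rcases Nat.lt_or_ge l.length 2 with h2 | h2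
  · -- trivial path: v = v0, contradiction
    rcases l with _ | ⟨a, t⟩
    · simp at hlen
    rcases t with _ | ⟨b, t'⟩
    · have ha : a = Sum.inr v0 := by simpa using hh
      have ha' : a = Sum.inr v := by simpa using hlast
      rw [ha] at ha'
      injection ha' with hvv
      exact absurd hfv (hvv ▸ hu f)
    · simp at h2
  · set n := l.length with hn
    have hvv : l[n-1]'(by omega) = Sum.inr v := getLast?_getElem hlast (by omega)
    have hidx : n - 2 + 1 = n - 1 := by omega
    have hadj : sumAdj E (l[n-2]'(by omega)) (l[n-1]'(by omega)) := by
      have := chain'_getElem hl.2.2.1 (n-2) (by omega)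
      simpa [hidx] using this
    have hgood := goodAt hl hh hu (n-2) (by omega)
    rw [show ∀ h, l[n-2+1]'h = l[n-1]'(by omega) from fun h => by congr 1] at hgood
    rcases hx2 : l[n-2]'(by omega) with f' | v'
    · rw [hx2, hvv] at hgood
      have hmem : pairInM M (Sum.inl f', Sum.inr v) := hgood.mpr ⟨v, rfl⟩
      have : (f', v) ∈ M := hmem
      have hff : (f', v) = (f, v) := hM.2.2 _ this _ hfv rfl
      have hf' : f' = f := by injection hff
      subst hf'
      exact mem_TI_of_mem_path hl hh hu (hx2 ▸ List.getElem_mem _)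
    · rw [hx2, hvv] at hadj
      exact absurd hadj (by simp [sumAdj])

lemma TI_neighbor (hM : IsMatching E M) {v : V} (hv : Sum.inr v ∈ incompleteSet E M)
    {f : F} (he : (f, v) ∈ E) : Sum.inl f ∈ incompleteSet E M := by
  classical
  by_cases hfv : (f, v) ∈ M
  · exact TI_V_partner hM hv hfv
  obtain ⟨v0, hu, l, hl, hh, hlast⟩ := hv
  rcases Classical.em ((Sum.inl f : F ⊕ V) ∈ l) with hfl | hfl
  · exact mem_TI_of_mem_path hl hh hu hfl
  · refine ⟨v0, hu, l ++ [Sum.inl f], ?_, ?_, ?_⟩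
    · refine alt_extend hl hlast hfl (by simpa [sumAdj] using he) ?_
      intro p hp
      have hpm : p ∈ l.zip l.tail := List.mem_of_getLast? hp
      have hsnd : l.getLast? = some p.2 := zipTail_getLast?_snd hp
      rw [hlast] at hsnd
      injection hsnd with hsnd
      have hg : goodRel M p.1 p.2 := chain'_rel_of_mem_zipTail (alt_good hl hh hu) (by simpa using hpm)
      have hpM : pairInM M (p.1, p.2) := hg.mpr ⟨v, hsnd.symm⟩
      have : pairInM M p := by rwa [show (p.1, p.2) = p from rfl] at hpM
      simpa [pairInM, hfv] using this
    · rw [List.head?_append, hh]; rfl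
    · simp [List.getLast?_concat]

lemma TI_F_partner (hM : IsMaxMatching E M) {f : F} (hf : Sum.inl f ∈ incompleteSet E M) :
    ∃ v : V, (f, v) ∈ M ∧ Sum.inr v ∈ incompleteSet E M := by
  obtain ⟨v0, hu, l, hl, hh, hlast⟩ := hf
  have hmatched : ∃ v : V, (f, v) ∈ M := by
    by_contra hc
    push_neg at hc
    exact aug_contra hM hl hh hu hlast (fun v => hc v)
  obtain ⟨v, hfv⟩ := hmatched
  refine ⟨v, hfv, ?_⟩
  classical
  rcases Classical.em ((Sum.inr v : F ⊕ V) ∈ l) with hvl | hvl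
  · exact mem_TI_of_mem_path hl hh hu hvl
  · refine ⟨v0, hu, l ++ [Sum.inr v], ?_, ?_, ?_⟩
    · refine alt_extend hl hlast hvl (by simpa [sumAdj] using hM.1.1 hfv) ?_
      intro p hp
      have hpm : p ∈ l.zip l.tail := List.mem_of_getLast? hp
      have hsnd : l.getLast? = some p.2 := zipTail_getLast?_snd hp
      rw [hlast] at hsnd
      injection hsnd with hsnd
      have hg : goodRel M p.1 p.2 := chain'_rel_of_mem_zipTail (alt_good hl hh hu) (by simpa using hpm)
      have hnpM : ¬ pairInM M (p.1, p.2) := fun hm => by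
        obtain ⟨w, hw⟩ := hg.mp hm
        rw [← hsnd] at hw
        exact absurd hw (by simp)
      have hnew : pairInM M (Sum.inl f, Sum.inr v) := hfv
      exact iff_of_false (fun hm => hnpM (by rwa [show p = (p.1, p.2) from rfl] at hm))
        (fun hc => hc hnew)
    · rw [List.head?_append, hh]; rfl
    · simp [List.getLast?_concat]

end DM4

section DM10
set_option linter.unusedSectionVars false
variable {F V : Type*} [Fintype F] [Fintype V] [DecidableEq F] [DecidableEq V]

open DMaux List Sum

lemma main_I (E M M' : Finset (F × V)) (hM : IsMaxMatching E M) (hM' : IsMaxMatching E M')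
    {f : F} (hf : Sum.inl f ∈ incompleteSet E M) :
    ∃ v : V, (f, v) ∈ M' ∧ Sum.inr v ∈ incompleteSet E M := by
  classical
  set A : Finset V := Finset.univ.filter (fun v => Sum.inr v ∈ incompleteSet E M) with hA
  set B : Finset F := Finset.univ.filter (fun g => Sum.inl g ∈ incompleteSet E M) with hB
  set U : Finset V := Finset.univ.filter (fun v => VUnmatched M v) with hU
  set U' : Finset V := Finset.univ.filter (fun v => VUnmatched M' v) with hU'
  have hUA : U ⊆ A := by
    intro v hv
    rw [hU, Finset.mem_filter] at hv
    rw [hA, Finset.mem_filter]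
    exact ⟨Finset.mem_univ _, mem_TI_of_unmatched hv.2⟩
  have hMM' : M.card = M'.card := le_antisymm (hM'.2 M hM.1) (hM.2 M' hM'.1)
  have hcardU : ∀ (N : Finset (F × V)), IsMatching E N →
      (Finset.univ.filter (fun v => VUnmatched N v) : Finset V).card
        = Fintype.card V - N.card := by
    intro N hN
    have himg : (Finset.univ.filter (fun v => VUnmatched N v) : Finset V)
        = Finset.univ \ N.image Prod.snd := by
      ext v
      constructor
      · intro hv
        rw [Finset.mem_filter] at hv
        rw [Finset.mem_sdiff]
        refine ⟨Finset.mem_univ _, ?_⟩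
        rw [Finset.mem_image]
        rintro ⟨e, he, hev⟩
        exact hv.2 e.1 (by rwa [show (e.1, v) = e from by rw [← hev]])
      · intro hv
        rw [Finset.mem_sdiff] at hv
        rw [Finset.mem_filter]
        refine ⟨Finset.mem_univ _, fun g hg => ?_⟩
        refine absurd ?_ hv.2
        rw [Finset.mem_image]
        exact ⟨(g, v), hg, rfl⟩
    rw [himg, Finset.card_sdiff_of_subset (Finset.subset_univ _), Finset.card_univ]
    congr 1
    apply Finset.card_image_of_injOn
    intro e he e' he' hee
    exact hN.2.2 e he e' he' hee
  have hcU : U.card = Fintype.card V - M.card := hcardU M hM.1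
  have hcU' : U'.card = Fintype.card V - M'.card := hcardU M' hM'.1
  have hUU' : U'.card = U.card := by rw [hcU, hcU', hMM']
  obtain ⟨vf, hvfM, hvfTI⟩ := TI_F_partner hM hf
  have hBA : B.card ≤ (A \ U).card := by
    have hex : ∀ g ∈ B, ∃ v : V, (g, v) ∈ M ∧ Sum.inr v ∈ incompleteSet E M := by
      intro g hg
      rw [hB, Finset.mem_filter] at hg
      exact TI_F_partner hM hg.2
    set ψ : F → V := fun g => if h : ∃ v : V, (g, v) ∈ M ∧ Sum.inr v ∈ incompleteSet E M
        then h.choose else vf with hψ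
    refine Finset.card_le_card_of_injOn ψ ?_ ?_
    · intro g hg
      have h := hex g hg
      simp only [hψ]
      rw [dif_pos h]
      have hsp := h.choose_spec
      rw [Finset.mem_coe, Finset.mem_sdiff, hA, hU, Finset.mem_filter, Finset.mem_filter]
      refine ⟨⟨Finset.mem_univ _, hsp.2⟩, ?_⟩
      rintro ⟨-, hunm⟩
      exact hunm g hsp.1
    · intro g1 h1 g2 h2 heq
      have he1 := hex g1 h1
      have he2 := hex g2 h2
      simp only [hψ] at heq
      rw [dif_pos he1, dif_pos he2] at heq
      have s1 := he1.choose_spec.1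
      have s2 := he2.choose_spec.1
      rw [heq] at s1
      have h3 := hM.1.2.2 _ s1 _ s2 rfl
      injection h3
  have hAcard : B.card + U.card ≤ A.card := by
    have h4 := Finset.card_sdiff_add_card_eq_card hUA
    omega
  have hexM' : ∀ v ∈ A \ U', ∃ g : F, (g, v) ∈ M' := by
    intro v hv
    rw [Finset.mem_sdiff] at hv
    by_contra hc
    push_neg at hc
    apply hv.2
    rw [hU', Finset.mem_filter]
    exact ⟨Finset.mem_univ _, fun g => hc g⟩
  set φ : V → F := fun v => if h : ∃ g : F, (g, v) ∈ M' then h.choose else f with hφ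
  have himg : (A \ U').image φ ⊆ B := by
    intro g hg
    rw [Finset.mem_image] at hg
    obtain ⟨v, hv, rfl⟩ := hg
    have hex2 := hexM' v hv
    simp only [hφ]
    rw [dif_pos hex2]
    have hspec := hex2.choose_spec
    rw [Finset.mem_sdiff, hA, Finset.mem_filter] at hv
    rw [hB, Finset.mem_filter]
    exact ⟨Finset.mem_univ _, TI_neighbor hM.1 hv.1.2 (hM'.1.1 hspec)⟩
  have hinj2 : Set.InjOn φ ((A \ U' : Finset V) : Set V) := by
    intro v1 h1 v2 h2 heq
    have he1 := hexM' v1 (by simpa using h1)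
    have he2 := hexM' v2 (by simpa using h2)
    simp only [hφ] at heq
    rw [dif_pos he1, dif_pos he2] at heq
    have s1 := he1.choose_spec
    have s2 := he2.choose_spec
    rw [heq] at s1
    have h3 := hM'.1.2.1 _ s1 _ s2 rfl
    injection h3
  have hcard2 : B.card ≤ (A \ U').card := by
    have h7 : A.card ≤ ((A \ U') ∪ U').card := Finset.card_le_card (by
      intro a ha
      rw [Finset.mem_union, Finset.mem_sdiff]
      by_cases h : a ∈ U'
      · exact Or.inr h
      · exact Or.inl ⟨ha, h⟩)
    have h8 := Finset.card_union_le (A \ U') U'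
    omega
  have himgcard : ((A \ U').image φ).card = (A \ U').card := Finset.card_image_of_injOn hinj2
  have heqB : (A \ U').image φ = B :=
    Finset.eq_of_subset_of_card_le himg (by omega)
  have hfB : f ∈ B := by
    rw [hB, Finset.mem_filter]
    exact ⟨Finset.mem_univ _, hf⟩
  rw [← heqB, Finset.mem_image] at hfB
  obtain ⟨v, hv, hveq⟩ := hfB
  have hex2 := hexM' v hv
  simp only [hφ] at hveq
  rw [dif_pos hex2] at hveq
  have hspec := hex2.choose_spec
  rw [hveq] at hspec
  refine ⟨v, hspec, ?_⟩
  rw [Finset.mem_sdiff, hA, Finset.mem_filter] at hv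
  exact hv.1.2

end DM10

section DM11
set_option linter.unusedSectionVars false
variable {F V : Type*} [Fintype F] [Fintype V] [DecidableEq F] [DecidableEq V]

open DMaux List Sum

/-- the bipartite graph with the two sides swapped. -/
def flipE (E : Finset (F × V)) : Finset (V × F) := E.image Prod.swap

lemma mem_flipE {E : Finset (F × V)} {v : V} {f : F} : (v, f) ∈ flipE E ↔ (f, v) ∈ E := by
  constructor
  · intro h
    rw [flipE, Finset.mem_image] at h
    obtain ⟨⟨a, b⟩, ha, h⟩ := h
    rw [Prod.swap_prod_mk, Prod.mk.injEq] at h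
    obtain ⟨rfl, rfl⟩ := h
    exact ha
  · intro h
    rw [flipE, Finset.mem_image]
    exact ⟨(f, v), h, rfl⟩

lemma flipE_flipE (E : Finset (F × V)) : flipE (flipE E) = E := by
  ext ⟨f, v⟩
  rw [mem_flipE, mem_flipE]

lemma card_flipE (E : Finset (F × V)) : (flipE E).card = E.card :=
  Finset.card_image_of_injective _ Prod.swap_injective

lemma isMatching_flip {E M : Finset (F × V)} (h : IsMatching E M) :
    IsMatching (flipE E) (flipE M) := by
  refine ⟨?_, ?_, ?_⟩
  · rintro ⟨v, f⟩ he
    rw [mem_flipE] at he ⊢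
    exact h.1 he
  · rintro ⟨v, f⟩ he ⟨v', f'⟩ he' heq
    rw [mem_flipE] at he he'
    simp only at heq
    subst heq
    have h3 := h.2.2 _ he _ he' rfl
    rw [Prod.mk.injEq] at h3
    rw [Prod.mk.injEq]
    exact ⟨rfl, h3.1⟩
  · rintro ⟨v, f⟩ he ⟨v', f'⟩ he' heq
    rw [mem_flipE] at he he'
    simp only at heq
    subst heq
    have h3 := h.2.1 _ he _ he' rfl
    rw [Prod.mk.injEq] at h3
    rw [Prod.mk.injEq]
    exact ⟨h3.2, rfl⟩

lemma isMaxMatching_flip {E M : Finset (F × V)} (h : IsMaxMatching E M) :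
    IsMaxMatching (flipE E) (flipE M) := by
  refine ⟨isMatching_flip h.1, ?_⟩
  intro N hN
  have h2 : IsMatching E (flipE N) := by
    have h3 := isMatching_flip hN
    rwa [flipE_flipE] at h3
  have h4 := h.2 _ h2
  rw [card_flipE] at h4
  rw [card_flipE]
  exact h4

lemma sumAdj_flip {E : Finset (F × V)} {x y : F ⊕ V} :
    sumAdj (flipE E) x.swap y.swap ↔ sumAdj E x y := by
  rcases x with f | v <;> rcases y with f' | v' <;>
    simp [sumAdj, Sum.swap, mem_flipE]

lemma pairInM_flip {M : Finset (F × V)} {p : (F ⊕ V) × (F ⊕ V)} :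
    pairInM (flipE M) (p.1.swap, p.2.swap) ↔ pairInM M p := by
  obtain ⟨x, y⟩ := p
  rcases x with f | v <;> rcases y with f' | v' <;>
    simp [pairInM, Sum.swap, mem_flipE]

lemma isAltPath_flip {E M : Finset (F × V)} {l : List (F ⊕ V)} (h : IsAltPath E M l) :
    IsAltPath (flipE E) (flipE M) (l.map Sum.swap) := by
  obtain ⟨hne, hnd, hadj, halt⟩ := h
  refine ⟨by simpa using hne, hnd.map Sum.swap_leftInverse.injective, ?_, ?_⟩
  · show List.IsChain _ _; rw [List.isChain_map]
    exact hadj.imp (fun a b hab => sumAdj_flip.mpr hab)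
  · have hzip : ((l.map Sum.swap).zip (l.map Sum.swap).tail)
        = (l.zip l.tail).map (Prod.map Sum.swap Sum.swap) := by
      rw [← List.map_tail, List.zip_map]
    rw [hzip]; show List.IsChain _ _; rw [List.isChain_map]
    refine halt.imp (fun p q hpq => ?_)
    exact pairInM_flip.trans (hpq.trans (not_congr pairInM_flip).symm)

lemma over_flip {E M : Finset (F × V)} {x : F ⊕ V} (h : x ∈ overcompleteSet E M) :
    x.swap ∈ incompleteSet (flipE E) (flipE M) := by
  obtain ⟨g, hg, l, hl, hh, hlast⟩ := h
  refine ⟨g, ?_, l.map Sum.swap, isAltPath_flip hl, ?_, ?_⟩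
  · intro w hw
    exact hg w (mem_flipE.mp hw)
  · rw [List.head?_map, hh]; rfl
  · rw [List.getLast?_map, hlast]; rfl

lemma inc_flip {E M : Finset (F × V)} {x : F ⊕ V} (h : x ∈ incompleteSet E M) :
    x.swap ∈ overcompleteSet (flipE E) (flipE M) := by
  obtain ⟨v, hv, l, hl, hh, hlast⟩ := h
  refine ⟨v, ?_, l.map Sum.swap, isAltPath_flip hl, ?_, ?_⟩
  · intro w hw
    exact hv w (mem_flipE.mp hw)
  · rw [List.head?_map, hh]; rfl
  · rw [List.getLast?_map, hlast]; rfl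

end DM11

/-- every maximum matching `M'` matches every vertex of `T_I ∩ F`
with a vertex of `T_I ∩ V`, and every vertex of `T_O ∩ V` with a vertex of
`T_O ∩ F` (where `T_I`, `T_O` are taken with respect to the maximum matching `M`);
in particular, every vertex of `T_I ∩ F` and of `T_O ∩ V` is covered by every
maximum matching. -/
theorem maximum_matchings_cover_parts (E M M' : Finset (F × V))
    (hM : IsMaxMatching E M) (hM' : IsMaxMatching E M') :
    (∀ f : F, Sum.inl f ∈ incompleteSet E M →
      ∃ v : V, (f, v) ∈ M' ∧ Sum.inr v ∈ incompleteSet E M) ∧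
    (∀ v : V, Sum.inr v ∈ overcompleteSet E M →
      ∃ f : F, (f, v) ∈ M' ∧ Sum.inl f ∈ overcompleteSet E M) := by
  constructor
  · intro f hf
    exact main_I E M M' hM hM' hf
  · intro v hv
    have h1 : Sum.inl v ∈ incompleteSet (flipE E) (flipE M) := over_flip hv
    obtain ⟨g, hg, hgTI⟩ :=
      main_I (flipE E) (flipE M) (flipE M') (isMaxMatching_flip hM) (isMaxMatching_flip hM') h1
    refine ⟨g, mem_flipE.mp hg, ?_⟩
    have h2 := inc_flip hgTI
    rwa [flipE_flipE, flipE_flipE] at h2
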